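/- Let C be an abelian category and let (T, F) be a torsion pair in C. Then every monomorphism f : X → Y in C factors as f = r ∘ l, where l : X → K is a monomorphism with coker(l) ∈ T and r : K → Y is a monomorphism with coker(r) ∈ F. -/

import Mathlib

open CategoryTheory CategoryTheory.Limits

namespace TorsionFS

variable {C : Type*} [Category C] [Abelian C]

/-- A torsion pair `(T, F)` in an abelian category. -/
structure IsTorsionPair (T F : Set C) : Prop where
  isoClosed_torsion : ∀ {X Y : C}, (X ≅ Y) → X ∈ T → Y ∈ T
  isoClosed_free : ∀ {X Y : C}, (X ≅ Y) → X ∈ F → Y ∈ F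
  hom_zero : ∀ {X Y : C}, X ∈ T → Y ∈ F → ∀ f : X ⟶ Y, f = 0
  exists_ses : ∀ X : C, ∃ (T' F' : C) (_ : T' ∈ T) (_ : F' ∈ F)
      (i : T' ⟶ X) (p : X ⟶ F') (w : i ≫ p = 0),
      (ShortComplex.mk i p w).ShortExact

/-- For monomorphisms `l`, `r`, `l ⊥ r` iff `Hom(coker l, coker r) = 0`. -/
def MonoPerp {A B X Y : C} (l : A ⟶ B) (r : X ⟶ Y) : Prop :=
  ∀ φ : cokernel l ⟶ cokernel r, φ = 0

/-- `Infl U`: monomorphisms whose cokernel lies in `U`. -/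
def Infl (U : Set C) : MorphismProperty C :=
  fun _ _ f => Mono f ∧ cokernel f ∈ U

/-- `Coker L`: objects isomorphic to the cokernel of some morphism in `L`. -/
def CokerClass (L : MorphismProperty C) : Set C :=
  {Z | ∃ (X Y : C) (f : X ⟶ Y), L f ∧ Nonempty (Z ≅ cokernel f)}

/-- A monomorphism factorization system `(L, R)` in an abelian category. -/
structure IsMonoFactorizationSystem (L R : MorphismProperty C) : Prop where
  mono_of_L : ∀ {X Y : C} (f : X ⟶ Y), L f → Mono f
  mono_of_R : ∀ {X Y : C} (f : X ⟶ Y), R f → Mono f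
  factor : ∀ {X Y : C} (f : X ⟶ Y), Mono f →
    ∃ (K : C) (l : X ⟶ K) (r : K ⟶ Y), L l ∧ R r ∧ l ≫ r = f
  left_eq : ∀ {X Y : C} (f : X ⟶ Y),
    L f ↔ (Mono f ∧ ∀ {Z W : C} (g : Z ⟶ W), R g → MonoPerp f g)
  right_eq : ∀ {Z W : C} (g : Z ⟶ W),
    R g ↔ (Mono g ∧ ∀ {X Y : C} (f : X ⟶ Y), L f → MonoPerp f g)

open CategoryTheory.Abelian.Pseudoelement

/-- if `(T, F)` is a torsion pair in an abelian category `C`, then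
every monomorphism `f : X ⟶ Y` factors as `f = r ∘ l` with `l` a monomorphism
whose cokernel lies in `T` and `r` a monomorphism whose cokernel lies in `F`. -/
theorem torsionPair_mono_factorization
    (T F : Set C) (h : IsTorsionPair T F)
    {X Y : C} (f : X ⟶ Y) (hf : Mono f) :
    ∃ (K : C) (l : X ⟶ K) (r : K ⟶ Y),
      Mono l ∧ cokernel l ∈ T ∧ Mono r ∧ cokernel r ∈ F ∧ l ≫ r = f := by
  obtain ⟨T', F', hT', hF', i, p, w, hS⟩ := h.exists_ses (cokernel f)
  have hmi : Mono i := hS.mono_f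
  have hep : Epi p := hS.epi_g
  set π : Y ⟶ cokernel f := cokernel.π f with hπ
  have hfg : f ≫ (π ≫ p) = 0 := by
    rw [← Category.assoc, hπ, cokernel.condition, zero_comp]
  set K := kernel (π ≫ p) with hK
  set r : K ⟶ Y := kernel.ι (π ≫ p) with hr
  set l : X ⟶ K := kernel.lift (π ≫ p) f hfg with hl
  have hlr : l ≫ r = f := kernel.lift_ι _ _ _
  have hmono_r : Mono r := by rw [hr]; infer_instance
  have hmono_l : Mono l := by
    have := hlr ▸ hf
    exact mono_of_mono l r
  have hepi : Epi (π ≫ p) := epi_comp _ _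
  have hS3 : (ShortComplex.mk r (π ≫ p) (kernel.condition _)).ShortExact :=
    { exact := ShortComplex.exact_of_f_is_kernel _ (kernelIsKernel _) }
  -- cokernel r ≅ F'
  have hcokr : cokernel r ∈ F := by
    refine h.isoClosed_free
      (IsColimit.coconePointUniqueUpToIso hS3.gIsCokernel (colimit.isColimit _)) hF'
  -- the map q : K ⟶ T'
  have hrπp : (r ≫ π) ≫ p = 0 := by rw [Category.assoc]; exact kernel.condition _
  obtain ⟨q, hq⟩ := hS.exact.lift' (r ≫ π) hrπp
  have hlq : l ≫ q = 0 := by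
    rw [← cancel_mono i, Category.assoc]
    change l ≫ q ≫ (ShortComplex.mk i p w).f = 0 ≫ i
    rw [hq, zero_comp, ← Category.assoc, hlr, hπ, cokernel.condition]
  have hq' : q ≫ i = r ≫ π := hq
  -- q is epi (pseudoelement chase)
  have hepiq : Epi q := by
    apply epi_of_pseudo_surjective
    intro t
    obtain ⟨y, hy⟩ := pseudo_surjective_of_epi π (pseudoApply i t)
    have hy0 : pseudoApply (π ≫ p) y = 0 := by
      rw [Abelian.Pseudoelement.comp_apply, hy, ← Abelian.Pseudoelement.comp_apply, w,
        Abelian.Pseudoelement.zero_apply]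
    obtain ⟨k, hk⟩ := pseudo_exact_of_exact hS3.exact y hy0
    refine ⟨k, pseudo_injective_of_mono i ?_⟩
    rw [← Abelian.Pseudoelement.comp_apply, hq', Abelian.Pseudoelement.comp_apply, hk, hy]
  -- exactness at K
  have hS4 : (ShortComplex.mk l q hlq).ShortExact := by
    refine { exact := ?_ }
    apply exact_of_pseudo_exact
    intro k hk
    have hS1 : (ShortComplex.mk f π (cokernel.condition f)).Exact :=
      ShortComplex.exact_of_g_is_cokernel _ (cokernelIsCokernel f)
    have h0 : pseudoApply π (pseudoApply r k) = 0 := by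
      rw [← Abelian.Pseudoelement.comp_apply, ← hq', Abelian.Pseudoelement.comp_apply, hk,
        apply_zero]
    obtain ⟨x, hx⟩ := pseudo_exact_of_exact hS1 (pseudoApply r k) h0
    refine ⟨x, pseudo_injective_of_mono r ?_⟩
    rw [← Abelian.Pseudoelement.comp_apply, hlr, hx]
  have hcokl : cokernel l ∈ T := by
    refine h.isoClosed_torsion
      (IsColimit.coconePointUniqueUpToIso hS4.gIsCokernel (colimit.isColimit _)) hT'
  exact ⟨K, l, r, hmono_l, hcokl, hmono_r, hcokr, hlr⟩

end TorsionFS
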